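/- Let k₁, k₂ be positive real numbers and α₁, β₁, α₂, β₂ ∈ ℝ. Define ψ : ℝ² → ℝ by ψ(x₁,x₂) = α₁ sin(k₁x₁) + β₁ cos(k₁x₁) + α₂ sin(k₂x₂) + β₂ cos(k₂x₂), set u = ∇^⊥ψ and ω = Δψ, and let g = u·∇ω (the vorticity form of the nonlinearity B(u,u)). Then −Δg = (k₁² + k₂²) g; that is, the force produced by the sum of two one-dimensional Laplacian eigenfunctions with orthogonal spectral supports is itself an eigenfunction of the (negative) Laplacian with eigenvalue k₁² + k₂², exhibiting a Kolmogorov force f with B(u,u) = f for the steady Euler flow u. -/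

import Mathlib

open MeasureTheory Filter Topology Real Set
open scoped RealInnerProductSpace
noncomputable section

/-- The plane, with its Euclidean structure. -/
abbrev E2 : Type := EuclideanSpace ℝ (Fin 2)

/-- Partial derivative `∂ᵢ g` at `x`. -/
def pd (i : Fin 2) (g : E2 → ℝ) (x : E2) : ℝ := fderiv ℝ g x (EuclideanSpace.single i 1)

/-- Laplacian `Δ g` at `x`. -/
def lap (g : E2 → ℝ) (x : E2) : ℝ := ∑ i : Fin 2, pd i (pd i g) x

/-- Perpendicular gradient `∇^⊥ψ = (−∂₂ψ, ∂₁ψ)`. -/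
def gradPerp (ψ : E2 → ℝ) (x : E2) : Fin 2 → ℝ := ![-(pd 1 ψ x), pd 0 ψ x]
/-- The sum of two one-dimensional Laplacian eigenfunctions in orthogonal variables. -/
def psiK (k₁ k₂ α₁ β₁ α₂ β₂ : ℝ) : E2 → ℝ := fun x =>
  α₁ * Real.sin (k₁ * x 0) + β₁ * Real.cos (k₁ * x 0)
    + α₂ * Real.sin (k₂ * x 1) + β₂ * Real.cos (k₂ * x 1)

/-! ### Auxiliary machinery -/

/-- The family `t ↦ a sin (kt) + b cos (kt)`, closed under differentiation. -/
def S (k a b : ℝ) : ℝ → ℝ := fun t => a * Real.sin (k*t) + b * Real.cos (k*t)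

lemma hasDerivAt_S (k a b t : ℝ) : HasDerivAt (S k a b) (S k (-(k*b)) (k*a) t) t := by
  have h1 : HasDerivAt (fun t : ℝ => k * t) k t := by simpa using (hasDerivAt_id t).const_mul k
  have hs := (Real.hasDerivAt_sin (k*t)).comp t h1
  have hc := (Real.hasDerivAt_cos (k*t)).comp t h1
  have h := ((hs.const_mul a).add (hc.const_mul b))
  refine h.congr_deriv ?_
  simp [S]; ring

lemma S_diff (k a b : ℝ) : Differentiable ℝ (S k a b) :=
  fun t => (hasDerivAt_S k a b t).differentiableAt

lemma deriv_S (k a b : ℝ) : deriv (S k a b) = S k (-(k*b)) (k*a) :=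
  funext fun t => (hasDerivAt_S k a b t).deriv

/-- Separated form `F(y₀)G(y₁) + H(y₀)K(y₁)`. -/
def P (F G H K : ℝ → ℝ) : E2 → ℝ := fun y => F (y 0) * G (y 1) + H (y 0) * K (y 1)

lemma hasFDerivAt_P (F G H K : ℝ → ℝ) (hF : Differentiable ℝ F) (hG : Differentiable ℝ G)
    (hH : Differentiable ℝ H) (hK : Differentiable ℝ K) (x : E2) :
    HasFDerivAt (P F G H K)
      (((G (x 1) * deriv F (x 0)) • (EuclideanSpace.proj (0:Fin 2) : E2 →L[ℝ] ℝ)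
        + (F (x 0) * deriv G (x 1)) • (EuclideanSpace.proj (1:Fin 2) : E2 →L[ℝ] ℝ))
       + ((K (x 1) * deriv H (x 0)) • (EuclideanSpace.proj (0:Fin 2) : E2 →L[ℝ] ℝ)
        + (H (x 0) * deriv K (x 1)) • (EuclideanSpace.proj (1:Fin 2) : E2 →L[ℝ] ℝ))) x := by
  have p0 : HasFDerivAt (fun y : E2 => y 0) (EuclideanSpace.proj (0:Fin 2) : E2 →L[ℝ] ℝ) x :=
    (EuclideanSpace.proj (0:Fin 2) : E2 →L[ℝ] ℝ).hasFDerivAt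
  have p1 : HasFDerivAt (fun y : E2 => y 1) (EuclideanSpace.proj (1:Fin 2) : E2 →L[ℝ] ℝ) x :=
    (EuclideanSpace.proj (1:Fin 2) : E2 →L[ℝ] ℝ).hasFDerivAt
  have hF0 : HasFDerivAt (fun y : E2 => F (y 0))
      (deriv F (x 0) • (EuclideanSpace.proj (0:Fin 2) : E2 →L[ℝ] ℝ)) x :=
    (hF (x 0)).hasDerivAt.comp_hasFDerivAt x p0
  have hG1 : HasFDerivAt (fun y : E2 => G (y 1))
      (deriv G (x 1) • (EuclideanSpace.proj (1:Fin 2) : E2 →L[ℝ] ℝ)) x :=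
    (hG (x 1)).hasDerivAt.comp_hasFDerivAt x p1
  have hH0 : HasFDerivAt (fun y : E2 => H (y 0))
      (deriv H (x 0) • (EuclideanSpace.proj (0:Fin 2) : E2 →L[ℝ] ℝ)) x :=
    (hH (x 0)).hasDerivAt.comp_hasFDerivAt x p0
  have hK1 : HasFDerivAt (fun y : E2 => K (y 1))
      (deriv K (x 1) • (EuclideanSpace.proj (1:Fin 2) : E2 →L[ℝ] ℝ)) x :=
    (hK (x 1)).hasDerivAt.comp_hasFDerivAt x p1
  have h1 := hF0.mul hG1
  have h2 := hH0.mul hK1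
  have := h1.add h2
  refine this.congr_fderiv ?_
  module

lemma proj_single (i j : Fin 2) :
    (EuclideanSpace.proj i : E2 →L[ℝ] ℝ) (EuclideanSpace.single j 1) = if i = j then 1 else 0 := by
  simp [EuclideanSpace.single_apply]

lemma pd0_P (F G H K : ℝ → ℝ) (hF : Differentiable ℝ F) (hG : Differentiable ℝ G)
    (hH : Differentiable ℝ H) (hK : Differentiable ℝ K) (x : E2) :
    pd 0 (P F G H K) x = deriv F (x 0) * G (x 1) + deriv H (x 0) * K (x 1) := by
  rw [pd, (hasFDerivAt_P F G H K hF hG hH hK x).fderiv]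
  simp [proj_single]
  try ring

lemma pd1_P (F G H K : ℝ → ℝ) (hF : Differentiable ℝ F) (hG : Differentiable ℝ G)
    (hH : Differentiable ℝ H) (hK : Differentiable ℝ K) (x : E2) :
    pd 1 (P F G H K) x = F (x 0) * deriv G (x 1) + H (x 0) * deriv K (x 1) := by
  rw [pd, (hasFDerivAt_P F G H K hF hG hH hK x).fderiv]
  simp [proj_single]
  try ring

lemma pd0_P_S (kF kG kH kK a b c d e f g h : ℝ) :
    pd 0 (P (S kF a b) (S kG c d) (S kH e f) (S kK g h))
      = P (S kF (-(kF*b)) (kF*a)) (S kG c d) (S kH (-(kH*f)) (kH*e)) (S kK g h) := by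
  funext x
  rw [pd0_P _ _ _ _ (S_diff _ _ _) (S_diff _ _ _) (S_diff _ _ _) (S_diff _ _ _), deriv_S, deriv_S]
  rfl

lemma pd1_P_S (kF kG kH kK a b c d e f g h : ℝ) :
    pd 1 (P (S kF a b) (S kG c d) (S kH e f) (S kK g h))
      = P (S kF a b) (S kG (-(kG*d)) (kG*c)) (S kH e f) (S kK (-(kK*h)) (kK*g)) := by
  funext x
  rw [pd1_P _ _ _ _ (S_diff _ _ _) (S_diff _ _ _) (S_diff _ _ _) (S_diff _ _ _), deriv_S, deriv_S]
  rfl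

lemma lap_P_S (kF kG kH kK a b c d e f g h : ℝ) (x : E2) :
    lap (P (S kF a b) (S kG c d) (S kH e f) (S kK g h)) x
      = P (S kF (-(kF^2*a)) (-(kF^2*b))) (S kG c d) (S kH (-(kH^2*e)) (-(kH^2*f))) (S kK g h) x
      + P (S kF a b) (S kG (-(kG^2*c)) (-(kG^2*d))) (S kH e f) (S kK (-(kK^2*g)) (-(kK^2*h))) x := by
  simp only [lap, Fin.sum_univ_two, pd0_P_S, pd1_P_S]
  simp [P, S]; ring

/-- With `ψ` a sum of two one-dimensional eigenfunctions with orthogonal spectral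
supports, `u = ∇^⊥ψ`, `ω = Δψ`, the nonlinearity `g = u·∇ω` (the vorticity form of
`B(u,u)`) satisfies `−Δg = (k₁² + k₂²)g`: a Kolmogorov force `f = B(u,u)` for the
steady Euler flow `u`. -/
theorem stmt19 (k₁ k₂ α₁ β₁ α₂ β₂ : ℝ) (hk₁ : 0 < k₁) (hk₂ : 0 < k₂) (x : E2) :
    -(lap (fun y => ∑ i : Fin 2,
        gradPerp (psiK k₁ k₂ α₁ β₁ α₂ β₂) y i * pd i (lap (psiK k₁ k₂ α₁ β₁ α₂ β₂)) y) x)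
      = (k₁^2 + k₂^2) * ∑ i : Fin 2,
          gradPerp (psiK k₁ k₂ α₁ β₁ α₂ β₂) x i
            * pd i (lap (psiK k₁ k₂ α₁ β₁ α₂ β₂)) x := by
  have hψ : psiK k₁ k₂ α₁ β₁ α₂ β₂ = P (S k₁ α₁ β₁) (S 0 0 1) (S 0 0 1) (S k₂ α₂ β₂) := by
    funext y
    simp [psiK, P, S]
    try ring
  have hω : lap (P (S k₁ α₁ β₁) (S 0 0 1) (S 0 0 1) (S k₂ α₂ β₂))
      = P (S k₁ (-(k₁^2*α₁)) (-(k₁^2*β₁))) (S 0 0 1) (S 0 0 1)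
          (S k₂ (-(k₂^2*α₂)) (-(k₂^2*β₂))) := by
    funext y
    rw [lap_P_S]
    simp [P, S]
    try ring
  have hg : (fun y => ∑ i : Fin 2,
        gradPerp (psiK k₁ k₂ α₁ β₁ α₂ β₂) y i * pd i (lap (psiK k₁ k₂ α₁ β₁ α₂ β₂)) y)
      = P (S k₁ (-(k₁^3*β₁)) (k₁^3*α₁)) (S k₂ (-(k₂*β₂)) (k₂*α₂))
          (S k₁ (-(k₁*β₁)) (k₁*α₁)) (S k₂ (k₂^3*β₂) (-(k₂^3*α₂))) := by
    funext y
    simp only [Fin.sum_univ_two, gradPerp, Matrix.cons_val_zero, Matrix.cons_val_one,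
      Matrix.head_cons, hψ, hω, pd0_P_S, pd1_P_S]
    simp [P, S]
    try ring
  rw [hg, show (∑ i : Fin 2, gradPerp (psiK k₁ k₂ α₁ β₁ α₂ β₂) x i
        * pd i (lap (psiK k₁ k₂ α₁ β₁ α₂ β₂)) x)
      = P (S k₁ (-(k₁^3*β₁)) (k₁^3*α₁)) (S k₂ (-(k₂*β₂)) (k₂*α₂))
          (S k₁ (-(k₁*β₁)) (k₁*α₁)) (S k₂ (k₂^3*β₂) (-(k₂^3*α₂))) x from congrFun hg x,
    lap_P_S]
  simp [P, S]
  try ring
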